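/- Let ω be irrational, T x = x + ω on ℝ/ℤ, and let A : ℝ → SL(2,ℝ) be continuous and 1-periodic. Let I ⊂ ℝ/ℤ be a finite union of nondegenerate closed intervals, and for x ∈ I let r(x) = min{ n ≥ 1 : T^n x ∈ I } be the first return time. If μ ≥ 1 and ‖A^{r(x)}(x)‖ ≤ μ^{r(x)} for every x ∈ I, then L(A) ≤ log μ, i.e. lim_{n→∞} (1/n)∫₀¹ log‖A^n(x)‖ dx ≤ log μ. -/

import Mathlib

open Real MeasureTheory Filter

/-- Operator norm of a 2×2 real matrix, acting on Euclidean space. -/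
noncomputable def opNorm (A : Matrix (Fin 2) (Fin 2) ℝ) : ℝ :=
  ‖(Matrix.toEuclideanCLM (𝕜 := ℝ) A : EuclideanSpace ℝ (Fin 2) →L[ℝ] EuclideanSpace ℝ (Fin 2))‖

/-- Iterates of the quasi-periodic cocycle: A^n(x) = A(x+(n-1)ω)⋯A(x+ω)A(x). -/
noncomputable def cocycle (ω : ℝ) (A : ℝ → Matrix (Fin 2) (Fin 2) ℝ) :
    ℕ → ℝ → Matrix (Fin 2) (Fin 2) ℝ
  | 0, _ => 1
  | n + 1, x => A (x + n * ω) * cocycle ω A n x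

/-- Finite Lyapunov exponents L_n(A) = (1/n) ∫₀¹ log ‖A^n(x)‖ dx. -/
noncomputable def LEn (ω : ℝ) (A : ℝ → Matrix (Fin 2) (Fin 2) ℝ) (n : ℕ) : ℝ :=
  (1 / n) * ∫ x in (0:ℝ)..1, Real.log (opNorm (cocycle ω A n x))

/-- First return time (under x ↦ x + ω on ℝ/ℤ) of x to the mod-1 set represented by J;
`sInf` of the empty set is the junk value 0. -/
noncomputable def firstReturn (ω : ℝ) (J : Set ℝ) (x : ℝ) : ℕ :=
  sInf {n : ℕ | 1 ≤ n ∧ ∃ m : ℤ, x + n * ω - m ∈ J}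

/-! ### Basic facts about `opNorm` -/

lemma opNorm_nonneg' (A : Matrix (Fin 2) (Fin 2) ℝ) : 0 ≤ opNorm A := norm_nonneg _

lemma opNorm_one' : opNorm 1 = 1 := by
  unfold opNorm
  rw [map_one]
  exact norm_one

lemma opNorm_mul_le' (A B : Matrix (Fin 2) (Fin 2) ℝ) :
    opNorm (A * B) ≤ opNorm A * opNorm B := by
  unfold opNorm
  rw [map_mul]
  exact norm_mul_le _ _

lemma continuous_opNorm : Continuous opNorm := by
  have h1 : Continuous fun A : Matrix (Fin 2) (Fin 2) ℝ =>
      (Matrix.toEuclideanCLM (𝕜 := ℝ) A :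
        EuclideanSpace ℝ (Fin 2) →L[ℝ] EuclideanSpace ℝ (Fin 2)) := by
    exact LinearMap.continuous_of_finiteDimensional
      { toFun := fun A => Matrix.toEuclideanCLM (𝕜 := ℝ) A
        map_add' := fun a b => map_add _ a b
        map_smul' := fun c a => map_smul _ c a }
  exact continuous_norm.comp h1

lemma norm_col_le (A : Matrix (Fin 2) (Fin 2) ℝ) (j : Fin 2) :
    Real.sqrt (A 0 j ^ 2 + A 1 j ^ 2) ≤ opNorm A := by
  set v : EuclideanSpace ℝ (Fin 2) :=
    (WithLp.equiv 2 (Fin 2 → ℝ)).symm (fun i => if i = j then 1 else 0)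
  have hv : ‖v‖ = 1 := by
    simp only [v, EuclideanSpace.norm_eq]
    rw [Fin.sum_univ_two]
    fin_cases j <;> simp
  have happ : (Matrix.toEuclideanCLM (𝕜 := ℝ) A) v =
      (WithLp.equiv 2 (Fin 2 → ℝ)).symm (A.mulVec (fun i => if i = j then 1 else 0)) := by
    simp [v, Matrix.toEuclideanCLM_toLp, Matrix.toLin'_apply]
  have hnormv : ‖(Matrix.toEuclideanCLM (𝕜 := ℝ) A) v‖ = Real.sqrt (A 0 j ^ 2 + A 1 j ^ 2) := by
    rw [happ]
    simp only [EuclideanSpace.norm_eq]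
    rw [Fin.sum_univ_two]
    have h0 : A.mulVec (fun i => if i = j then 1 else 0) 0 = A 0 j := by
      simp [Matrix.mulVec, dotProduct, Fin.sum_univ_two]
    have h1 : A.mulVec (fun i => if i = j then 1 else 0) 1 = A 1 j := by
      simp [Matrix.mulVec, dotProduct, Fin.sum_univ_two]
    fin_cases j <;> simp [h0, h1, sq_abs]
  calc Real.sqrt (A 0 j ^ 2 + A 1 j ^ 2) = ‖(Matrix.toEuclideanCLM (𝕜 := ℝ) A) v‖ := hnormv.symm
    _ ≤ opNorm A * ‖v‖ := ContinuousLinearMap.le_opNorm _ _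
    _ = opNorm A := by rw [hv, mul_one]

lemma one_le_opNorm_of_det (A : Matrix (Fin 2) (Fin 2) ℝ) (h : A.det = 1) : 1 ≤ opNorm A := by
  have h0 := norm_col_le A 0
  have h1 := norm_col_le A 1
  have hd : A 0 0 * A 1 1 - A 0 1 * A 1 0 = 1 := by rw [← Matrix.det_fin_two]; exact h
  have hs0 : Real.sqrt (A 0 0 ^ 2 + A 1 0 ^ 2) ^ 2 = A 0 0 ^ 2 + A 1 0 ^ 2 :=
    Real.sq_sqrt (by positivity)
  have hs1 : Real.sqrt (A 0 1 ^ 2 + A 1 1 ^ 2) ^ 2 = A 0 1 ^ 2 + A 1 1 ^ 2 :=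
    Real.sq_sqrt (by positivity)
  have hn : (0:ℝ) ≤ opNorm A := norm_nonneg _
  have hkey : 1 ≤ (A 0 0 ^ 2 + A 1 0 ^ 2) * (A 0 1 ^ 2 + A 1 1 ^ 2) := by
    nlinarith [sq_nonneg (A 0 0 * A 0 1 + A 1 0 * A 1 1)]
  set s0 := Real.sqrt (A 0 0 ^ 2 + A 1 0 ^ 2) with hs0def
  set s1 := Real.sqrt (A 0 1 ^ 2 + A 1 1 ^ 2) with hs1def
  have hs0n : 0 ≤ s0 := Real.sqrt_nonneg _
  have hs1n : 0 ≤ s1 := Real.sqrt_nonneg _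
  have hsq : 1 ≤ (s0 * s1) ^ 2 := by rw [mul_pow, hs0, hs1]; exact hkey
  have hp : 1 ≤ s0 * s1 := by
    by_contra hc
    push_neg at hc
    have h2 : (s0 * s1) ^ 2 < 1 := by nlinarith [mul_nonneg hs0n hs1n]
    linarith
  have ht : s0 * s1 ≤ opNorm A * opNorm A := mul_le_mul h0 h1 hs1n hn
  nlinarith

lemma opNorm_pos_of_det (A : Matrix (Fin 2) (Fin 2) ℝ) (h : A.det = 1) : 0 < opNorm A :=
  lt_of_lt_of_le one_pos (one_le_opNorm_of_det A h)

/-! ### Basic facts about `cocycle` -/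

section Cocycle

variable {ω : ℝ} {A : ℝ → Matrix (Fin 2) (Fin 2) ℝ}

lemma cocycle_add (m n : ℕ) (x : ℝ) :
    cocycle ω A (m + n) x = cocycle ω A m (x + n * ω) * cocycle ω A n x := by
  induction m with
  | zero => simp [cocycle]
  | succ m ih =>
      have h1 : m + 1 + n = (m + n) + 1 := by omega
      rw [h1]
      show A (x + (m + n : ℕ) * ω) * cocycle ω A (m + n) x = _
      rw [ih]
      show _ = A (x + n * ω + (m : ℕ) * ω) * cocycle ω A m (x + n * ω) * cocycle ω A n x
      rw [mul_assoc]
      congr 2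
      push_cast
      ring

lemma det_cocycle (hAdet : ∀ x, (A x).det = 1) (n : ℕ) (x : ℝ) :
    (cocycle ω A n x).det = 1 := by
  induction n with
  | zero => simp [cocycle]
  | succ n ih => rw [show cocycle ω A (n+1) x = A (x + n * ω) * cocycle ω A n x from rfl,
      Matrix.det_mul, hAdet, ih, one_mul]

lemma cocycle_periodic (hAper : ∀ x, A (x + 1) = A x) (n : ℕ) (x : ℝ) :
    cocycle ω A n (x + 1) = cocycle ω A n x := by
  induction n with
  | zero => rfl
  | succ n ih =>
      show A (x + 1 + n * ω) * cocycle ω A n (x + 1) = A (x + n * ω) * cocycle ω A n x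
      rw [ih, show x + 1 + n * ω = (x + n * ω) + 1 by ring, hAper]

lemma cocycle_continuous (hAcont : Continuous A) (n : ℕ) :
    Continuous fun x => cocycle ω A n x := by
  induction n with
  | zero => simpa [cocycle] using continuous_const
  | succ n ih =>
      exact (hAcont.comp (continuous_id.add continuous_const)).mul ih

lemma cocycle_opNorm_le (C : ℝ) (hC1 : 1 ≤ C) (hC : ∀ x, opNorm (A x) ≤ C) (n : ℕ) (x : ℝ) :
    opNorm (cocycle ω A n x) ≤ C ^ n := by
  induction n with
  | zero => rw [show cocycle ω A 0 x = 1 from rfl, opNorm_one', pow_zero]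
  | succ n ih =>
      calc opNorm (cocycle ω A (n+1) x) ≤ opNorm (A (x + n * ω)) * opNorm (cocycle ω A n x) :=
            opNorm_mul_le' _ _
        _ ≤ C * C ^ n := mul_le_mul (hC _) ih (opNorm_nonneg' _) (by linarith)
        _ = C ^ (n + 1) := (pow_succ' C n).symm

end Cocycle

/-! ### Hitting an interval under an irrational rotation, with uniformly bounded time -/

lemma hit_interval_of_step {a b δ : ℝ} (hδ : 0 < δ) (hδ' : δ < b - a) (x : ℝ) :
    ∃ j : ℕ, (j : ℝ) ≤ 1 / δ + 1 ∧ ∃ k : ℤ, x + j * δ - k ∈ Set.Icc a b := by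
  set k : ℤ := ⌊x - a⌋ + 1 with hk
  have hxk : x < a + k := by
    have := Int.lt_floor_add_one (x - a); push_cast [hk]; linarith
  have hk1 : a + k - x ≤ 1 := by
    have := Int.floor_le (x - a); push_cast [hk]; linarith
  set c : ℝ := a + k - x with hc
  have hc0 : 0 < c := by simp only [hc]; linarith
  set j : ℕ := ⌈c / δ⌉.toNat with hj
  have hjc : (j : ℝ) = ⌈c / δ⌉ := by
    rw [hj]; exact_mod_cast Int.toNat_of_nonneg (Int.ceil_nonneg (le_of_lt (div_pos hc0 hδ)))
  have hj1 : c / δ ≤ (j : ℝ) := by rw [hjc]; exact Int.le_ceil _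
  have hj2 : (j : ℝ) < c / δ + 1 := by rw [hjc]; exact Int.ceil_lt_add_one _
  have hcj : c ≤ j * δ := by
    rw [div_le_iff₀ hδ] at hj1; linarith
  have hjd : (j : ℝ) * δ < c + δ := by
    have := mul_lt_mul_of_pos_right hj2 hδ
    rw [add_mul, div_mul_cancel₀ _ (ne_of_gt hδ), one_mul] at this
    linarith
  refine ⟨j, ?_, k, ?_⟩
  · have h1 : c / δ ≤ 1 / δ := by gcongr
    linarith
  · simp only [Set.mem_Icc]
    constructor
    · have : x + j * δ - k = a + (j * δ - c) := by simp only [hc]; ring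
      rw [this]; linarith
    · have : x + j * δ - k = a + (j * δ - c) := by simp only [hc]; ring
      rw [this]; linarith

lemma exists_uniform_hit {ω : ℝ} (hω : Irrational ω) {a b : ℝ} (hab : a < b) :
    ∃ N : ℕ, ∀ x : ℝ, ∃ j : ℕ, j ≤ N ∧ ∃ k : ℤ, x + j * ω - k ∈ Set.Icc a b := by
  obtain ⟨n0, hn0⟩ := exists_nat_gt (1 / (b - a))
  set n : ℕ := n0 + 1 with hn
  have hnpos : 0 < n := Nat.succ_pos _
  obtain ⟨p, q, hq0, hqn, hqd⟩ := Real.exists_int_int_abs_mul_sub_le ω hnpos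
  set δ : ℝ := q * ω - p with hδdef
  have hδne : δ ≠ 0 := by
    intro h
    have : (q : ℝ) ≠ 0 := by exact_mod_cast hq0.ne'
    apply hω
    refine ⟨(p : ℚ) / (q : ℚ), ?_⟩
    push_cast
    field_simp
    linarith [h]
  have hba : 0 < b - a := by linarith
  have hδlt : |δ| < b - a := by
    have h1 : 1 / ((n : ℝ) + 1) < b - a := by
      rw [div_lt_iff₀ (by positivity)]
      rw [div_lt_iff₀ hba] at hn0
      have : (n0 : ℝ) ≤ n := by exact_mod_cast Nat.le_succ n0
      nlinarith
    calc |δ| ≤ 1 / ((n : ℝ) + 1) := hqd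
      _ < b - a := h1
  have hq0' : (0 : ℝ) < q := by exact_mod_cast hq0
  set J : ℕ := ⌈1 / |δ|⌉.toNat + 1 with hJ
  have habs : 0 < |δ| := abs_pos.mpr hδne
  have hJbound : ∀ j : ℕ, (j : ℝ) ≤ 1 / |δ| + 1 → j ≤ J := by
    intro j hj
    have h2 := Int.le_ceil (1 / |δ|)
    have h3 : (⌈1 / |δ|⌉ : ℝ) ≤ ((⌈1 / |δ|⌉.toNat : ℤ) : ℝ) := by
      exact_mod_cast Int.self_le_toNat _
    push_cast at h3
    have : (j : ℝ) ≤ (J : ℝ) := by push_cast [hJ]; linarith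
    exact_mod_cast this
  refine ⟨J * q.toNat, fun x => ?_⟩
  rcases lt_or_gt_of_ne hδne with hneg | hpos
  · have habδ : -δ < (-a) - (-b) := by
      rw [abs_of_neg hneg] at hδlt; linarith
    obtain ⟨j, hjb, k, hk⟩ := hit_interval_of_step (by linarith : 0 < -δ) habδ (-x)
    refine ⟨j * q.toNat, ?_, j * p - k, ?_⟩
    · have : j ≤ J := hJbound j (by rwa [abs_of_neg hneg])
      exact Nat.mul_le_mul_right _ this
    · simp only [Set.mem_Icc] at hk ⊢
      have hqt : ((q.toNat : ℕ) : ℝ) = (q : ℝ) := by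
        exact_mod_cast congrArg (Int.cast : ℤ → ℝ) (Int.toNat_of_nonneg hq0.le)
      push_cast
      rw [hqt]
      constructor <;> nlinarith [hk.1, hk.2]
  · have habδ : δ < b - a := by rwa [abs_of_pos hpos] at hδlt
    obtain ⟨j, hjb, k, hk⟩ := hit_interval_of_step hpos habδ x
    refine ⟨j * q.toNat, ?_, k + j * p, ?_⟩
    · have : j ≤ J := hJbound j (by rwa [abs_of_pos hpos])
      exact Nat.mul_le_mul_right _ this
    · simp only [Set.mem_Icc] at hk ⊢
      have hqt : ((q.toNat : ℕ) : ℝ) = (q : ℝ) := by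
        exact_mod_cast congrArg (Int.cast : ℤ → ℝ) (Int.toNat_of_nonneg hq0.le)
      push_cast
      rw [hqt]
      constructor <;> nlinarith [hk.1, hk.2]

theorem LE_upper_bound_from_return_blocks
    (ω : ℝ) (hω : Irrational ω)
    (A : ℝ → Matrix (Fin 2) (Fin 2) ℝ)
    (hAcont : Continuous A) (hAper : ∀ x, A (x + 1) = A x)
    (hAdet : ∀ x, (A x).det = 1)
    (I : Set ℝ)
    (hI : ∃ S : Finset (ℝ × ℝ), S.Nonempty ∧ (∀ p ∈ S, p.1 < p.2) ∧
      I = ⋃ p ∈ S, Set.Icc p.1 p.2)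
    (μ : ℝ) (hμ : 1 ≤ μ)
    (hblocks : ∀ x : ℝ, (∃ m : ℤ, (x - m : ℝ) ∈ I) →
      opNorm (cocycle ω A (firstReturn ω I x) x) ≤ μ ^ firstReturn ω I x) :
    ∃ L : ℝ, Tendsto (fun n => LEn ω A n) atTop (nhds L) ∧ L ≤ Real.log μ := by
  have hμ0 : (0:ℝ) < μ := lt_of_lt_of_le one_pos hμ
  -- an interval inside I
  obtain ⟨S, hSne, hSlt, hSI⟩ := hI
  obtain ⟨pq, hpq⟩ := hSne
  have hab : pq.1 < pq.2 := hSlt _ hpq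
  have hIcc : Set.Icc pq.1 pq.2 ⊆ I := by
    intro t ht
    rw [hSI]
    exact Set.mem_biUnion hpq ht
  -- uniform hitting time
  obtain ⟨N, hN⟩ := exists_uniform_hit hω hab
  have hNI : ∀ x : ℝ, ∃ j : ℕ, j ≤ N ∧ ∃ k : ℤ, x + j * ω - k ∈ I := by
    intro x
    obtain ⟨j, hj, k, hk⟩ := hN x
    exact ⟨j, hj, k, hIcc hk⟩
  -- a uniform bound on opNorm (A x)
  have hperA : Function.Periodic (fun x => opNorm (A x)) 1 := fun x => by simp [hAper x]
  obtain ⟨C, hC⟩ := isBounded_iff_forall_norm_le.mp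
    (hperA.isBounded_of_continuous one_ne_zero (continuous_opNorm.comp hAcont))
  set C0 : ℝ := max C 1 with hC0def
  have hC01 : 1 ≤ C0 := le_max_right _ _
  have hC0 : ∀ x, opNorm (A x) ≤ C0 := by
    intro x
    have := hC (opNorm (A x)) ⟨x, rfl⟩
    have h2 : opNorm (A x) ≤ C := (le_abs_self _).trans (by simpa using this)
    exact h2.trans (le_max_left _ _)
  have hbasic := cocycle_opNorm_le (A := A) (ω := ω) C0 hC01 hC0
  -- facts about the first return time
  have hret : ∀ x : ℝ, 1 ≤ firstReturn ω I x ∧ firstReturn ω I x ≤ N + 1 ∧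
      ∃ m : ℤ, x + (firstReturn ω I x : ℝ) * ω - m ∈ I := by
    intro x
    obtain ⟨j, hj, k, hk⟩ := hNI (x + ω)
    have hk' : x + ((j + 1 : ℕ) : ℝ) * ω - k ∈ I := by
      have : x + ((j + 1 : ℕ) : ℝ) * ω - k = x + ω + j * ω - k := by push_cast; ring
      rw [this]; exact hk
    have hmem : (j + 1) ∈ {n : ℕ | 1 ≤ n ∧ ∃ m : ℤ, x + n * ω - m ∈ I} :=
      ⟨Nat.le_add_left 1 j, k, hk'⟩
    have hne : {n : ℕ | 1 ≤ n ∧ ∃ m : ℤ, x + n * ω - m ∈ I}.Nonempty := ⟨j + 1, hmem⟩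
    have hInf := Nat.sInf_mem hne
    refine ⟨hInf.1, ?_, hInf.2⟩
    calc firstReturn ω I x ≤ j + 1 := Nat.sInf_le hmem
      _ ≤ N + 1 := by omega
  -- key bound on blocks starting in I
  have key : ∀ n : ℕ, ∀ x : ℝ, (∃ m : ℤ, (x - m : ℝ) ∈ I) →
      opNorm (cocycle ω A n x) ≤ C0 ^ (N + 1) * μ ^ n := by
    intro n
    induction n using Nat.strong_induction_on with
    | _ n ih =>
      intro x hx
      by_cases hn : n ≤ N + 1
      · calc opNorm (cocycle ω A n x) ≤ C0 ^ n := hbasic n x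
          _ ≤ C0 ^ (N + 1) := pow_le_pow_right₀ hC01 hn
          _ = C0 ^ (N + 1) * 1 := (mul_one _).symm
          _ ≤ C0 ^ (N + 1) * μ ^ n := by
              gcongr
              exact one_le_pow₀ hμ
      · push_neg at hn
        set r : ℕ := firstReturn ω I x with hrdef
        obtain ⟨hr1, hrN, m, hm⟩ := hret x
        have hrn : r < n := by omega
        have hdecomp : cocycle ω A n x = cocycle ω A (n - r) (x + r * ω) * cocycle ω A r x := by
          conv_lhs => rw [show n = (n - r) + r by omega]
          exact cocycle_add (n - r) r x
        have hIH : opNorm (cocycle ω A (n - r) (x + r * ω)) ≤ C0 ^ (N + 1) * μ ^ (n - r) := by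
          apply ih (n - r) (by omega)
          exact ⟨m, by simpa using hm⟩
        have hbl : opNorm (cocycle ω A r x) ≤ μ ^ r := hblocks x hx
        calc opNorm (cocycle ω A n x)
            ≤ opNorm (cocycle ω A (n - r) (x + r * ω)) * opNorm (cocycle ω A r x) := by
              rw [hdecomp]; exact opNorm_mul_le' _ _
          _ ≤ (C0 ^ (N + 1) * μ ^ (n - r)) * μ ^ r :=
              mul_le_mul hIH hbl (opNorm_nonneg' _) (by positivity)
          _ = C0 ^ (N + 1) * μ ^ n := by
              rw [mul_assoc, ← pow_add]
              congr 2
              omega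
  -- global bound
  have glob : ∀ n : ℕ, ∀ x : ℝ, opNorm (cocycle ω A n x) ≤ C0 ^ (2 * N + 2) * μ ^ n := by
    intro n x
    by_cases hn : n ≤ 2 * N + 2
    · calc opNorm (cocycle ω A n x) ≤ C0 ^ n := hbasic n x
        _ ≤ C0 ^ (2 * N + 2) := pow_le_pow_right₀ hC01 hn
        _ = C0 ^ (2 * N + 2) * 1 := (mul_one _).symm
        _ ≤ C0 ^ (2 * N + 2) * μ ^ n := by
            gcongr
            exact one_le_pow₀ hμ
    · push_neg at hn
      obtain ⟨j, hj, k, hk⟩ := hNI x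
      have hjn : j < n := by omega
      have hdecomp : cocycle ω A n x = cocycle ω A (n - j) (x + j * ω) * cocycle ω A j x := by
        conv_lhs => rw [show n = (n - j) + j by omega]
        exact cocycle_add (n - j) j x
      have h1 : opNorm (cocycle ω A (n - j) (x + j * ω)) ≤ C0 ^ (N + 1) * μ ^ (n - j) :=
        key (n - j) (x + j * ω) ⟨k, by simpa using hk⟩
      have h2 : opNorm (cocycle ω A j x) ≤ C0 ^ j := hbasic j x
      calc opNorm (cocycle ω A n x)
          ≤ opNorm (cocycle ω A (n - j) (x + j * ω)) * opNorm (cocycle ω A j x) := by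
            rw [hdecomp]; exact opNorm_mul_le' _ _
        _ ≤ (C0 ^ (N + 1) * μ ^ (n - j)) * C0 ^ j :=
            mul_le_mul h1 h2 (opNorm_nonneg' _) (by positivity)
        _ ≤ (C0 ^ (N + 1) * μ ^ n) * C0 ^ (N + 1) := by
            have e1 : μ ^ (n - j) ≤ μ ^ n := pow_le_pow_right₀ hμ (Nat.sub_le n j)
            have e2 : C0 ^ j ≤ C0 ^ (N + 1) := pow_le_pow_right₀ hC01 (by omega)
            exact mul_le_mul (mul_le_mul le_rfl e1 (by positivity) (by positivity)) e2
              (by positivity) (by positivity)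
        _ = C0 ^ (2 * N + 2) * μ ^ n := by
            rw [mul_comm _ (C0 ^ (N + 1)), ← mul_assoc, ← pow_add]
            congr 2
            omega
  -- the subadditive sequence u
  set f : ℕ → ℝ → ℝ := fun n x => Real.log (opNorm (cocycle ω A n x)) with hfdef
  have hfpos : ∀ n x, 0 < opNorm (cocycle ω A n x) := fun n x =>
    opNorm_pos_of_det _ (det_cocycle hAdet n x)
  have hfone : ∀ n x, 1 ≤ opNorm (cocycle ω A n x) := fun n x =>
    one_le_opNorm_of_det _ (det_cocycle hAdet n x)
  have hfcont : ∀ n, Continuous (f n) := fun n =>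
    Continuous.log (continuous_opNorm.comp (cocycle_continuous hAcont n))
      (fun x => (hfpos n x).ne')
  have hfint : ∀ n, IntervalIntegrable (f n) volume 0 1 := fun n =>
    (hfcont n).intervalIntegrable 0 1
  set u : ℕ → ℝ := fun n => ∫ x in (0:ℝ)..1, f n x with hudef
  have huint : ∀ n (c : ℝ), (∫ x in (0:ℝ)..1, f n (x + c)) = u n := by
    intro n c
    have hper : Function.Periodic (f n) 1 := fun x => by
      simp only [f, cocycle_periodic hAper n x]
    rw [intervalIntegral.integral_comp_add_right (f n) c]
    have := hper.intervalIntegral_add_eq c 0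
    simpa [zero_add, add_comm] using this
  have hsub : Subadditive u := by
    intro m n
    have hpoint : ∀ x : ℝ, f (m + n) x ≤ f m (x + n * ω) + f n x := by
      intro x
      have hd : cocycle ω A (m + n) x = cocycle ω A m (x + n * ω) * cocycle ω A n x :=
        cocycle_add m n x
      have h1 : opNorm (cocycle ω A (m + n) x) ≤
          opNorm (cocycle ω A m (x + n * ω)) * opNorm (cocycle ω A n x) := by
        rw [hd]; exact opNorm_mul_le' _ _
      have h2 := Real.log_le_log (hfpos (m + n) x) h1
      rwa [Real.log_mul (hfpos m _).ne' (hfpos n _).ne'] at h2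
    have hcont1 : Continuous fun x => f m (x + n * ω) + f n x :=
      ((hfcont m).comp (continuous_id.add continuous_const)).add (hfcont n)
    calc u (m + n) ≤ ∫ x in (0:ℝ)..1, (f m (x + n * ω) + f n x) := by
          apply intervalIntegral.integral_mono_on (by norm_num) (hfint (m + n))
            (hcont1.intervalIntegrable 0 1)
          intro x _
          exact hpoint x
      _ = (∫ x in (0:ℝ)..1, f m (x + n * ω)) + ∫ x in (0:ℝ)..1, f n x := by
          apply intervalIntegral.integral_add
            (((hfcont m).comp (continuous_id.add continuous_const)).intervalIntegrable 0 1)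
            (hfint n)
      _ = u m + u n := by rw [huint m (n * ω)]
  have hbdd : BddBelow (Set.range fun n : ℕ => u n / n) := by
    refine ⟨0, ?_⟩
    rintro y ⟨n, rfl⟩
    have hun : 0 ≤ u n := by
      apply intervalIntegral.integral_nonneg (by norm_num)
      intro x _
      exact Real.log_nonneg (hfone n x)
    positivity
  refine ⟨hsub.lim, ?_, ?_⟩
  · have hT := hsub.tendsto_lim hbdd
    have heq : (fun n : ℕ => LEn ω A n) = fun n : ℕ => u n / n := by
      funext n
      rw [LEn, one_div_mul_eq_div]
    rw [heq]
    exact hT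
  · -- L ≤ log μ
    have hK1 : (1:ℝ) ≤ C0 ^ (2 * N + 2) := one_le_pow₀ hC01
    have hK0 : (0:ℝ) < C0 ^ (2 * N + 2) := lt_of_lt_of_le one_pos hK1
    have hub : ∀ n : ℕ, 1 ≤ n →
        u n / n ≤ Real.log (C0 ^ (2 * N + 2)) / n + Real.log μ := by
      intro n hn
      have hptwise : ∀ x : ℝ, f n x ≤ Real.log (C0 ^ (2 * N + 2)) + n * Real.log μ := by
        intro x
        have h1 := Real.log_le_log (hfpos n x) (glob n x)
        rwa [Real.log_mul hK0.ne' (by positivity), Real.log_pow μ n] at h1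
      have hun : u n ≤ Real.log (C0 ^ (2 * N + 2)) + n * Real.log μ := by
        calc u n ≤ ∫ _x in (0:ℝ)..1, (Real.log (C0 ^ (2 * N + 2)) + n * Real.log μ) := by
              apply intervalIntegral.integral_mono_on (by norm_num) (hfint n)
                (intervalIntegrable_const)
              intro x _
              exact hptwise x
          _ = Real.log (C0 ^ (2 * N + 2)) + n * Real.log μ := by simp
      have hn0 : (0:ℝ) < n := by exact_mod_cast hn
      have h2 : u n / n ≤ (Real.log (C0 ^ (2 * N + 2)) + ↑n * Real.log μ) / n := by
        gcongr
      rwa [add_div, mul_div_cancel_left₀ _ hn0.ne'] at h2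
    have hT2 : Tendsto (fun n : ℕ => Real.log (C0 ^ (2 * N + 2)) / n + Real.log μ) atTop
        (nhds (0 + Real.log μ)) :=
      (tendsto_const_div_atTop_nhds_zero_nat _).add tendsto_const_nhds
    have hle := le_of_tendsto_of_tendsto (hsub.tendsto_lim hbdd) hT2
      (eventually_atTop.mpr ⟨1, hub⟩)
    simpa using hle
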